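/- Let K and L be disjoint nonempty sets with K ∪ L = [n], let i ∈ K and j ∈ L, and consider the determinant det(X) of the generic symmetric n×n matrix X whose (a,b) entry is the variable x_{ab} = x_{ba} (one polynomial variable for each unordered pair {a,b}, including a = b), viewed as a multivariate polynomial. Then every monomial occurring with nonzero coefficient in the partial derivative ∂det(X)/∂x_{ij} is divisible by x_{kl} for some k ∈ K and l ∈ L. -/

import Mathlib

open MvPolynomial

noncomputable def genericSymMatrix (n : ℕ) :
    Matrix (Fin n) (Fin n) (MvPolynomial (Sym2 (Fin n)) ℚ) :=
  Matrix.of fun a b => X (Sym2.mk a b)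

open Finset in
private lemma aux_prod_X {R τ α : Type*} [CommSemiring R] (s : Finset α) (f : α → τ) :
    ∏ a ∈ s, (X (f a) : MvPolynomial τ R)
      = monomial (∑ a ∈ s, Finsupp.single (f a) 1) 1 := by
  classical
  induction s using Finset.cons_induction with
  | empty => simp [MvPolynomial.monomial_zero']
  | cons a s ha ih => rw [prod_cons, sum_cons, ih, X, monomial_mul, one_mul]

open Finset in
private lemma aux_card_eq {n : ℕ} (K L : Finset (Fin n))
    (hdisj : Disjoint K L) (hcover : K ∪ L = Finset.univ) (σ : Equiv.Perm (Fin n)) :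
    (K.filter fun a => σ a ∈ L).card = (L.filter fun a => σ a ∈ K).card := by
  classical
  have hKL : ∀ b : Fin n, b ∈ K ↔ b ∉ L := by
    intro b
    constructor
    · intro h h'; exact (Finset.disjoint_left.mp hdisj) h h'
    · intro h
      have := Finset.mem_univ b
      rw [← hcover, Finset.mem_union] at this
      tauto
  have h1 : (K.filter fun a => σ a ∈ L).card + (K.filter fun a => σ a ∈ K).card = K.card := by
    have : (K.filter fun a => σ a ∈ K) = (K.filter fun a => ¬ σ a ∈ L) := by
      apply Finset.filter_congr
      intro a _
      simp [hKL (σ a)]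
    rw [this, Finset.card_filter_add_card_filter_not]
  have h2 : (Finset.univ.filter fun a : Fin n => σ a ∈ K).card = K.card := by
    have : (Finset.univ.filter fun a : Fin n => σ a ∈ K) = K.image σ.symm := by
      ext a
      simp [Equiv.eq_symm_apply, eq_comm]
    rw [this, Finset.card_image_of_injective _ σ.symm.injective]
  have h3 : (K.filter fun a => σ a ∈ K).card + (L.filter fun a => σ a ∈ K).card
      = (Finset.univ.filter fun a : Fin n => σ a ∈ K).card := by
    rw [← hcover, Finset.filter_union,
      Finset.card_union_of_disjoint (Finset.disjoint_filter_filter hdisj)]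
  omega

theorem monomials_of_pderiv_det_divisible {n : ℕ} (K L : Finset (Fin n))
    (hK : K.Nonempty) (hL : L.Nonempty)
    (hdisj : Disjoint K L) (hcover : K ∪ L = Finset.univ)
    (i : Fin n) (hi : i ∈ K) (j : Fin n) (hj : j ∈ L) :
    ∀ d ∈ (pderiv (Sym2.mk i j) (genericSymMatrix n).det).support,
      ∃ k ∈ K, ∃ l ∈ L, d (Sym2.mk k l) ≠ 0 := by
  classical
  intro d hd
  set t : Sym2 (Fin n) := Sym2.mk i j with ht
  set P : Sym2 (Fin n) → Prop := fun s => ∃ k ∈ K, ∃ l ∈ L, s = Sym2.mk k l with hPdef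
  set w : (Sym2 (Fin n) →₀ ℕ) → ℕ := fun e => e.sum fun s m => if P s then m else 0 with hwdef
  have hw0 : ∀ s, (if P s then (0:ℕ) else 0) = 0 := fun s => by split <;> rfl
  have hwadd : ∀ e₁ e₂, w (e₁ + e₂) = w e₁ + w e₂ := by
    intro e₁ e₂
    show (e₁ + e₂).sum (fun s m => if P s then m else 0)
      = e₁.sum (fun s m => if P s then m else 0) + e₂.sum (fun s m => if P s then m else 0)
    refine Finsupp.sum_add_index' (h := fun s m => if P s then m else 0) (fun s => hw0 s) ?_
    intro s m₁ m₂; split <;> simp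
  have hwsingle : ∀ s, w (Finsupp.single s 1) = if P s then 1 else 0 := by
    intro s
    show (Finsupp.single s 1).sum (fun s m => if P s then m else 0) = _
    exact Finsupp.sum_single_index (h := fun s m => if P s then m else 0) (hw0 s)
  -- Step 1: find d' in the support of det
  have hdet := MvPolynomial.as_sum (genericSymMatrix n).det
  obtain ⟨d', hd'supp, hd't, hdd'⟩ :
      ∃ d' ∈ (genericSymMatrix n).det.support, d' t ≠ 0 ∧ d = d' - Finsupp.single t 1 := by
    rw [hdet] at hd
    rw [map_sum] at hd
    have := MvPolynomial.support_sum hd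
    obtain ⟨d', hd'supp, hmem⟩ := Finset.mem_biUnion.mp this
    refine ⟨d', hd'supp, ?_, ?_⟩
    · rw [pderiv_monomial, MvPolynomial.support_monomial] at hmem
      by_contra h0
      rw [h0] at hmem
      simp at hmem
    · rw [pderiv_monomial, MvPolynomial.support_monomial] at hmem
      split at hmem
      · simp at hmem
      · simpa using hmem
  -- Step 2: d' comes from a permutation
  obtain ⟨σ, hσ⟩ :
      ∃ σ : Equiv.Perm (Fin n), d' = ∑ a, Finsupp.single (Sym2.mk (σ a) a) 1 := by
    rw [Matrix.det_apply] at hd'supp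
    have := MvPolynomial.support_sum hd'supp
    obtain ⟨σ, -, hmem⟩ := Finset.mem_biUnion.mp this
    refine ⟨σ, ?_⟩
    have hprod : (∏ a, (genericSymMatrix n) (σ a) a)
        = monomial (∑ a, Finsupp.single (Sym2.mk (σ a) a) 1) (1:ℚ) := by
      rw [← aux_prod_X]
      rfl
    rw [hprod, MvPolynomial.smul_monomial, MvPolynomial.support_monomial] at hmem
    split at hmem
    · simp at hmem
    · simpa using hmem
  -- Step 3: parity
  have hPt : P t := ⟨i, hi, j, hj, rfl⟩
  have hle : Finsupp.single t 1 ≤ d' := Finsupp.single_le_iff.mpr (Nat.one_le_iff_ne_zero.mpr hd't)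
  have hd'eq : d' = d + Finsupp.single t 1 := by
    rw [hdd']
    exact (tsub_add_cancel_of_le hle).symm
  have hwd' : w d' = w d + 1 := by
    rw [hd'eq, hwadd, hwsingle, if_pos hPt]
  have heven : Even (w d') := by
    have hws : w d' = ∑ a, (if P (Sym2.mk (σ a) a) then 1 else 0) := by
      rw [hσ]
      show (∑ a, Finsupp.single (Sym2.mk (σ a) a) 1).sum (fun s m => if P s then m else 0) = _
      rw [← Finsupp.sum_finsetSum_index (h := fun s m => if P s then m else 0)
        (fun s => hw0 s) (fun s m₁ m₂ => by split <;> simp)]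
      exact Finset.sum_congr rfl fun a _ =>
        Finsupp.sum_single_index (h := fun s m => if P s then m else 0) (hw0 _)
    have hcard : w d' = (Finset.univ.filter fun a => P (Sym2.mk (σ a) a)).card := by
      rw [hws, Finset.card_filter]
    have hKL : ∀ b : Fin n, b ∈ K ↔ b ∉ L := by
      intro b
      constructor
      · intro h h'; exact (Finset.disjoint_left.mp hdisj) h h'
      · intro h
        have := Finset.mem_univ b
        rw [← hcover, Finset.mem_union] at this
        tauto
    have hsplit : (Finset.univ.filter fun a => P (Sym2.mk (σ a) a))
        = (K.filter fun a => σ a ∈ L) ∪ (L.filter fun a => σ a ∈ K) := by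
      rw [← hcover, Finset.filter_union]
      congr 1
      · apply Finset.filter_congr
        intro a haK
        simp only [hPdef]
        constructor
        · rintro ⟨k, hk, l, hl, hs⟩
          rcases Sym2.eq_iff.mp hs with ⟨h1, h2⟩ | ⟨h1, h2⟩
          · exact absurd (show a ∈ L by rw [h2]; exact hl) ((hKL a).mp haK)
          · exact h1 ▸ hl
        · intro hσL
          exact ⟨a, haK, σ a, hσL, Sym2.eq_swap⟩
      · apply Finset.filter_congr
        intro a haL
        simp only [hPdef]
        constructor
        · rintro ⟨k, hk, l, hl, hs⟩
          rcases Sym2.eq_iff.mp hs with ⟨h1, h2⟩ | ⟨h1, h2⟩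
          · exact h1 ▸ hk
          · exact absurd haL ((hKL a).mp (show a ∈ K by rw [h2]; exact hk))
        · intro hσK
          exact ⟨σ a, hσK, a, haL, rfl⟩
    rw [hcard, hsplit, Finset.card_union_of_disjoint
      (Finset.disjoint_filter_filter hdisj),
      aux_card_eq K L hdisj hcover σ]
    exact Even.add_self _
  -- Step 4: conclude
  rw [hwd'] at heven
  have hwdne : w d ≠ 0 := by
    intro h0
    rw [h0] at heven
    simp at heven
  obtain ⟨s, hs, hsne⟩ := Finset.exists_ne_zero_of_sum_ne_zero hwdne
  have hsne' : (if P s then d s else 0) ≠ 0 := hsne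
  have hPs : P s := by
    by_contra h
    rw [if_neg h] at hsne'
    exact hsne' rfl
  rw [if_pos hPs] at hsne'
  obtain ⟨k, hk, l, hl, hs_eq⟩ := hPs
  refine ⟨k, hk, l, hl, ?_⟩
  rw [← hs_eq]
  exact hsne'
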